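/- If a finite group G satisfies the identity [[x,y],z] = [x,[y,z]] for all x, y, z ∈ G (associativity of the commutator operation), then G is solvable. -/

import Mathlib

def gcomm {G : Type*} [Group G] (a b : G) : G := a⁻¹ * b⁻¹ * a * b

section aux
variable {G : Type*} [Group G]

lemma gcomm_swap (a b : G) : gcomm b a = (gcomm a b)⁻¹ := by unfold gcomm; group
lemma gcomm_self (a : G) : gcomm a a = 1 := by unfold gcomm; group
lemma gcomm_one_right (a : G) : gcomm a 1 = 1 := by unfold gcomm; group

lemma commute_of_gcomm {a b : G} (h : gcomm a b = 1) : Commute a b := by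
  have h2 := congrArg (fun t => b * a * t) h
  simp only [gcomm, mul_one] at h2
  simp only [mul_assoc, mul_inv_cancel_left] at h2
  exact h2

lemma gcomm_inv_right' (a z : G) : gcomm a z⁻¹ = z * (gcomm a z)⁻¹ * z⁻¹ := by
  unfold gcomm; group

lemma hall_witt (x y z : G) :
    (y⁻¹ * gcomm (gcomm x y⁻¹) z * y) * (z⁻¹ * gcomm (gcomm y z⁻¹) x * z) *
      (x⁻¹ * gcomm (gcomm z x⁻¹) y * x) = 1 := by
  unfold gcomm; group

lemma h1 (hassoc : ∀ x y z : G, gcomm (gcomm x y) z = gcomm x (gcomm y z)) (a b : G) : gcomm (gcomm a b) b = 1 := by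
  rw [hassoc, gcomm_self, gcomm_one_right]

lemma rrel (hassoc : ∀ x y z : G, gcomm (gcomm x y) z = gcomm x (gcomm y z)) (x y z : G) : gcomm (gcomm x y) z = (gcomm (gcomm z x) y)⁻¹ := by
  rw [gcomm_swap z (gcomm x y), ← hassoc z x y]

lemma cyc (hassoc : ∀ x y z : G, gcomm (gcomm x y) z = gcomm x (gcomm y z)) (x y z : G) : gcomm (gcomm x y) z = gcomm (gcomm y z) x := by
  rw [rrel hassoc x y z, rrel hassoc z x y, inv_inv]

lemma ord2 (hassoc : ∀ x y z : G, gcomm (gcomm x y) z = gcomm x (gcomm y z)) (x y z : G) : gcomm (gcomm x y) z = (gcomm (gcomm x y) z)⁻¹ := by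
  calc gcomm (gcomm x y) z = (gcomm (gcomm z x) y)⁻¹ := rrel hassoc x y z
    _ = (gcomm (gcomm x y) z)⁻¹ := by rw [cyc hassoc z x y]

lemma com3 (hassoc : ∀ x y z : G, gcomm (gcomm x y) z = gcomm x (gcomm y z)) (x y z : G) : Commute (gcomm (gcomm x y) z) z :=
  commute_of_gcomm (h1 hassoc (gcomm x y) z)

lemma com2 (hassoc : ∀ x y z : G, gcomm (gcomm x y) z = gcomm x (gcomm y z)) (x y z : G) : Commute (gcomm (gcomm x y) z) y := by
  rw [cyc hassoc, cyc hassoc]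
  exact com3 hassoc z x y

lemma inv3 (hassoc : ∀ x y z : G, gcomm (gcomm x y) z = gcomm x (gcomm y z)) (x y z : G) : gcomm (gcomm x y) z⁻¹ = (gcomm (gcomm x y) z)⁻¹ := by
  rw [gcomm_inv_right']
  have h := (com3 hassoc x y z).inv_left
  calc z * (gcomm (gcomm x y) z)⁻¹ * z⁻¹
      = (gcomm (gcomm x y) z)⁻¹ * z * z⁻¹ := by rw [← h.eq]
    _ = (gcomm (gcomm x y) z)⁻¹ := by group

lemma inv2 (hassoc : ∀ x y z : G, gcomm (gcomm x y) z = gcomm x (gcomm y z)) (x y z : G) : gcomm (gcomm x y⁻¹) z = (gcomm (gcomm x y) z)⁻¹ := by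
  rw [cyc hassoc x y⁻¹ z, cyc hassoc y⁻¹ z x, inv3 hassoc, cyc hassoc z x y]

lemma key (hassoc : ∀ x y z : G, gcomm (gcomm x y) z = gcomm x (gcomm y z)) (x y z : G) : gcomm (gcomm x y) z = 1 := by
  have hA : gcomm (gcomm x y⁻¹) z = gcomm (gcomm x y) z :=
    (inv2 hassoc x y z).trans (ord2 hassoc x y z).symm
  have hB : gcomm (gcomm y z⁻¹) x = gcomm (gcomm x y) z :=
    ((inv2 hassoc y z x).trans (ord2 hassoc y z x).symm).trans (cyc hassoc x y z).symm
  have hC : gcomm (gcomm z x⁻¹) y = gcomm (gcomm x y) z :=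
    ((inv2 hassoc z x y).trans (ord2 hassoc z x y).symm).trans (cyc hassoc z x y)
  have HW := hall_witt x y z
  have cA : Commute (gcomm (gcomm x y⁻¹) z) y := by
    simpa using (com2 hassoc x y⁻¹ z).inv_right
  have cB : Commute (gcomm (gcomm y z⁻¹) x) z := by
    simpa using (com2 hassoc y z⁻¹ x).inv_right
  have cC : Commute (gcomm (gcomm z x⁻¹) y) x := by
    simpa using (com2 hassoc z x⁻¹ y).inv_right
  have eA : y⁻¹ * gcomm (gcomm x y⁻¹) z * y = gcomm (gcomm x y⁻¹) z := by
    rw [mul_assoc, cA.eq, inv_mul_cancel_left]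
  have eB : z⁻¹ * gcomm (gcomm y z⁻¹) x * z = gcomm (gcomm y z⁻¹) x := by
    rw [mul_assoc, cB.eq, inv_mul_cancel_left]
  have eC : x⁻¹ * gcomm (gcomm z x⁻¹) y * x = gcomm (gcomm z x⁻¹) y := by
    rw [mul_assoc, cC.eq, inv_mul_cancel_left]
  rw [eA, eB, eC, hA, hB, hC] at HW
  have hw2 : gcomm (gcomm x y) z * gcomm (gcomm x y) z = 1 :=
    mul_eq_one_iff_eq_inv.mpr (ord2 hassoc x y z)
  rw [hw2, one_mul] at HW
  exact HW

end aux

theorem assoc_commutator_implies_solvable {G : Type*} [Group G] [Finite G]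
    (hassoc : ∀ x y z : G, gcomm (gcomm x y) z = gcomm x (gcomm y z)) :
    IsSolvable G := by
  open scoped commutatorElement in
  have h3 : ∀ a b c : G, ⁅⁅a, b⁆, c⁆ = 1 := by
    intro a b c
    have hk := key hassoc b⁻¹ a⁻¹ c⁻¹
    have heq : ⁅⁅a, b⁆, c⁆ = gcomm (gcomm b⁻¹ a⁻¹) c⁻¹ := by
      simp only [gcomm, commutatorElement_def]; group
    rw [heq, hk]
  have hcen : commutator G ≤ Subgroup.center G := by
    rw [commutator, Subgroup.commutator_le]
    intro g _ h _
    rw [Subgroup.mem_center_iff]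
    intro c
    exact (commutatorElement_eq_one_iff_commute.mp (h3 g h c)).symm.eq
  have hds : derivedSeries G 2 = ⊥ := by
    rw [eq_bot_iff]
    have h2 : derivedSeries G 2 = ⁅derivedSeries G 1, derivedSeries G 1⁆ := rfl
    rw [h2, Subgroup.commutator_le]
    intro p hp q hq
    rw [Subgroup.mem_bot]
    have hpc : p ∈ Subgroup.center G := hcen (by rwa [← derivedSeries_one])
    exact commutatorElement_eq_one_iff_commute.mpr ((Subgroup.mem_center_iff.mp hpc q).symm)
  exact ⟨2, hds⟩
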